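/- Let σ > 0 and μ > 0, and define h : ℝ → ℝ by h(u) = 2·(1 − exp(−2π²μ²u/(1 + 4π²σ²u)) · (1 + 4π²σ²u)^{−1/2}) for u ≥ 0. If 4π²(μ² + σ²) > 1, then there exists u* with 0 < u* ≤ 2 such that h(u*) = u*. -/

import Mathlib

open Real

/-- If `4π²(μ² + σ²) > 1`, the spectral-mixture recurrence map
`h(u) = 2(1 − exp(−2π²μ²u/(1 + 4π²σ²u))·(1 + 4π²σ²u)^{−1/2})` has a
fixed point `u*` with `0 < u* ≤ 2`. -/
theorem sm_recurrence_has_positive_fixed_point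
    (σ μ : ℝ) (hσ : 0 < σ) (hμ : 0 < μ)
    (h : ℝ → ℝ)
    (hh : ∀ u ≥ (0 : ℝ), h u
      = 2 * (1 - Real.exp (-(2 * π ^ 2 * μ ^ 2 * u) / (1 + 4 * π ^ 2 * σ ^ 2 * u))
          * (1 + 4 * π ^ 2 * σ ^ 2 * u) ^ (-(1 : ℝ) / 2)))
    (hcond : 4 * π ^ 2 * (μ ^ 2 + σ ^ 2) > 1) :
    ∃ ustar : ℝ, 0 < ustar ∧ ustar ≤ 2 ∧ h ustar = ustar := by
  set a : ℝ := 2 * π ^ 2 * μ ^ 2 with ha_def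
  set b : ℝ := 4 * π ^ 2 * σ ^ 2 with hb_def
  have hπ : 0 < π := Real.pi_pos
  have ha : 0 < a := by positivity
  have hb : 0 < b := by positivity
  set f : ℝ → ℝ := fun u =>
    2 * (1 - Real.exp (-(a * u) / (1 + b * u)) * (1 + b * u) ^ (-(1 : ℝ) / 2)) with hf_def
  have hhf : ∀ u ≥ (0 : ℝ), h u = f u := by
    intro u hu
    rw [hh u hu]
  have hf0 : f 0 = 0 := by
    simp [hf_def, Real.one_rpow]
  -- derivative of f at 0 is 2a + b
  have hderiv : HasDerivAt f (2 * a + b) 0 := by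
    have hden : HasDerivAt (fun u : ℝ => 1 + b * u) b 0 := by
      simpa using ((hasDerivAt_id (0 : ℝ)).const_mul b).const_add 1
    have hnum : HasDerivAt (fun u : ℝ => -(a * u)) (-a) 0 := by
      have := ((hasDerivAt_id (0 : ℝ)).const_mul a).neg; simp only [mul_one] at this; exact this
    have hden0 : (1 : ℝ) + b * 0 ≠ 0 := by norm_num
    have hA : HasDerivAt (fun u : ℝ => -(a * u) / (1 + b * u)) (-a) 0 := by
      have := hnum.div hden hden0
      convert this using 1
      case e'_9 =>
        field_simp
        ring
      all_goals rfl
    have hE : HasDerivAt (fun u : ℝ => Real.exp (-(a * u) / (1 + b * u))) (-a) 0 := by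
      have := hA.exp
      simpa using this
    have hP : HasDerivAt (fun u : ℝ => (1 + b * u) ^ (-(1 : ℝ) / 2)) (-(b / 2)) 0 := by
      have := hden.rpow_const (p := -(1 : ℝ) / 2) (Or.inl hden0)
      convert this using 1
      simp [Real.one_rpow]
      ring
    have hprod : HasDerivAt
        (fun u : ℝ => Real.exp (-(a * u) / (1 + b * u)) * (1 + b * u) ^ (-(1 : ℝ) / 2))
        (-a - b / 2) 0 := by
      have := hE.mul hP
      convert this using 1
      case e'_9 =>
        simp [Real.one_rpow]
        ring
      all_goals rfl
    have := (hprod.const_sub 1).const_mul 2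
    convert this using 1
    case e'_9 => ring
    all_goals rfl
  have hc1 : 1 < 2 * a + b := by
    have : 2 * a + b = 4 * π ^ 2 * (μ ^ 2 + σ ^ 2) := by
      simp only [ha_def, hb_def]; ring
    linarith [hcond, this.ge, this.le]
  -- slope tendsto
  have hslope : Filter.Tendsto (slope f 0) (nhdsWithin 0 {(0:ℝ)}ᶜ) (nhds (2 * a + b)) :=
    hasDerivAt_iff_tendsto_slope.mp hderiv
  have hev : ∀ᶠ u in nhdsWithin 0 {(0:ℝ)}ᶜ, 1 < slope f 0 u :=
    hslope.eventually (eventually_gt_nhds hc1)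
  have hmono : nhdsWithin (0:ℝ) (Set.Ioi 0) ≤ nhdsWithin 0 {(0:ℝ)}ᶜ :=
    nhdsWithin_mono _ (fun x hx => ne_of_gt hx)
  have hev2 : ∀ᶠ u in nhdsWithin (0:ℝ) (Set.Ioi 0), 1 < slope f 0 u := hmono hev
  have hev3 : ∀ᶠ u in nhdsWithin (0:ℝ) (Set.Ioi 0), u ∈ Set.Ioo (0:ℝ) 2 :=
    Ioo_mem_nhdsGT_of_mem (by norm_num : (0:ℝ) ∈ Set.Ico (0:ℝ) 2)
  obtain ⟨u₀, hsl, hu₀⟩ := (hev2.and hev3).exists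
  have hu₀0 : 0 < u₀ := hu₀.1
  have hu₀2 : u₀ < 2 := hu₀.2
  have hfu₀ : u₀ < f u₀ := by
    have : slope f 0 u₀ = f u₀ / u₀ := by
      simp [slope_def_field, hf0]
    rw [this] at hsl
    calc u₀ = 1 * u₀ := (one_mul u₀).symm
    _ < (f u₀ / u₀) * u₀ := by exact mul_lt_mul_of_pos_right hsl hu₀0
    _ = f u₀ := by field_simp
  -- f 2 < 2
  have hf2 : f 2 < 2 := by
    have hpos : 0 < Real.exp (-(a * 2) / (1 + b * 2)) * (1 + b * 2) ^ (-(1 : ℝ) / 2) := by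
      apply mul_pos (Real.exp_pos _)
      apply Real.rpow_pos_of_pos
      linarith
    simp only [hf_def]
    nlinarith
  -- continuity of g = f - id on [u₀, 2]
  have hcont : ContinuousOn (fun u => f u - u) (Set.Icc u₀ 2) := by
    have hdenne : ∀ u ∈ Set.Icc u₀ 2, (1 : ℝ) + b * u ≠ 0 := by
      intro u hu
      have : 0 ≤ u := le_trans hu₀0.le hu.1
      positivity
    have hdenc : ContinuousOn (fun u : ℝ => 1 + b * u) (Set.Icc u₀ 2) :=
      (continuous_const.add (continuous_const.mul continuous_id)).continuousOn
    have hAc : ContinuousOn (fun u : ℝ => -(a * u) / (1 + b * u)) (Set.Icc u₀ 2) :=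
      ((continuous_const.mul continuous_id).neg.continuousOn).div hdenc hdenne
    have hEc : ContinuousOn (fun u : ℝ => Real.exp (-(a * u) / (1 + b * u))) (Set.Icc u₀ 2) :=
      Real.continuous_exp.comp_continuousOn hAc
    have hPc : ContinuousOn (fun u : ℝ => (1 + b * u) ^ (-(1 : ℝ) / 2)) (Set.Icc u₀ 2) :=
      hdenc.rpow_const (fun u hu => Or.inl (hdenne u hu))
    exact (continuousOn_const.mul (continuousOn_const.sub (hEc.mul hPc))).sub continuous_id.continuousOn
  -- IVT
  have hmem : (0 : ℝ) ∈ Set.Icc (f 2 - 2) (f u₀ - u₀) :=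
    ⟨by linarith, by linarith⟩
  obtain ⟨x, hx, hgx⟩ := intermediate_value_Icc' hu₀2.le hcont hmem
  refine ⟨x, lt_of_lt_of_le hu₀0 hx.1, hx.2, ?_⟩
  rw [hhf x (le_trans hu₀0.le hx.1)]
  have hgx' : f x - x = 0 := hgx
  linarith
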